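/- For a parse tree of a context-free hyperedge replacement grammar, any two orders of applying the production rules that are consistent with the tree structure (i.e., a parent rule is applied before its children) yield isomorphic hypergraphs; in particular the parse sequence obtained by a depth-first traversal generates the same hypergraph as the parse tree. -/

import Mathlib

/-- A labeled hypergraph over the node universe `ℕ`, with ordered attachment: each
hyperedge is a duplicate-free list of attachment nodes together with a label. -/
structure HG (L' : Type) where
  V : Finset ℕ
  E : Multiset (List ℕ × L')

/-- Isomorphism of hypergraphs: a renaming of nodes that is injective on the node set,
maps the node set onto the other node set, and maps the hyperedge multiset onto the
other hyperedge multiset (preserving labels and attachment order). -/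
def HGIso {L' : Type} (H₁ H₂ : HG L') : Prop :=
  ∃ g : ℕ → ℕ, Set.InjOn g (H₁.V : Set ℕ) ∧ H₁.V.image g = H₂.V ∧
    H₁.E.map (fun ed => (ed.1.map g, ed.2)) = H₂.E

/-- The right-hand side of a production rule: a hypergraph with an ordered list of
external nodes. -/
structure PRule (L' : Type) where
  ext : List ℕ
  rhs : HG L'
  ext_nodup : ext.Nodup
  ext_sub : ∀ x ∈ ext, x ∈ rhs.V
  edges_sub : ∀ ed ∈ rhs.E, (∀ x ∈ ed.1, x ∈ rhs.V) ∧ ed.1.Nodup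

variable {L ι : Type}

/-- Apply the rule attached to parse-tree node `i`: the (unique) non-terminal hyperedge of
`H` labeled `Sum.inr i` is deleted and a freshly renamed copy of the right-hand side
`(rl i).rhs` is glued in, identifying the `k`-th external node with the `k`-th attachment
node of the replaced hyperedge. -/
def ApplyAt [DecidableEq L] [DecidableEq ι] (rl : ι → PRule (L ⊕ ι)) (i : ι)
    (H H' : HG (L ⊕ ι)) : Prop :=
  ∃ (e : List ℕ × (L ⊕ ι)) (f : ℕ → ℕ),
    e ∈ H.E ∧ e.2 = Sum.inr i ∧
    Set.InjOn f ((rl i).rhs.V : Set ℕ) ∧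
    (∀ v ∈ (rl i).rhs.V, v ∉ (rl i).ext → f v ∉ H.V) ∧
    (rl i).ext.map f = e.1 ∧
    H'.V = H.V ∪ ((rl i).rhs.V \ (rl i).ext.toFinset).image f ∧
    H'.E = H.E.erase e + (rl i).rhs.E.map (fun ed => (ed.1.map f, ed.2))

/-- Sequential application of the rules at the parse-tree nodes listed in `σ`. -/
inductive ApplySeq [DecidableEq L] [DecidableEq ι] (rl : ι → PRule (L ⊕ ι)) :
    List ι → HG (L ⊕ ι) → HG (L ⊕ ι) → Prop
  | nil (H : HG (L ⊕ ι)) : ApplySeq rl [] H H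
  | cons {i : ι} {σ : List ι} {H H' H'' : HG (L ⊕ ι)} :
      ApplyAt rl i H H' → ApplySeq rl σ H' H'' → ApplySeq rl (i :: σ) H H''

/-- An order of rule applications consistent with the parse-tree structure: every tree
node occurs exactly once, and each parent is applied before its children. -/
def ConsistentOrder [DecidableEq ι] (ρ : ι) (pa : ι → ι) (σ : List ι) : Prop :=
  σ.Nodup ∧ (∀ i : ι, i ∈ σ) ∧
    ∀ j : ι, j ≠ ρ → ∀ (hp : pa j ∈ σ) (hj : j ∈ σ), σ.idxOf (pa j) < σ.idxOf j


section Aux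

variable {L' : Type}

/-- well-formed: edge attachments are inside V and duplicate-free -/
def WFhg (H : HG L') : Prop := ∀ ed ∈ H.E, (∀ x ∈ ed.1, x ∈ H.V) ∧ ed.1.Nodup

/-- edge renaming -/
def emap (g : ℕ → ℕ) (ed : List ℕ × L') : List ℕ × L' := (ed.1.map g, ed.2)

lemma erase_add_of_mem {α : Type*} [DecidableEq α] {s : Multiset α} (t : Multiset α)
    {a : α} (h : a ∈ s) : (s + t).erase a = s.erase a + t := by
  conv_lhs => rw [← Multiset.cons_erase h]
  rw [Multiset.cons_add, Multiset.erase_cons_head]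

lemma countP_one_unique {α : Type*} (p : α → Prop) [DecidablePred p] {s : Multiset α}
    (h : s.countP p = 1) {a b : α} (ha : a ∈ s) (hb : b ∈ s) (pa : p a) (pb : p b) :
    a = b := by
  rw [Multiset.countP_eq_card_filter] at h
  have hafk : a ∈ s.filter p := Multiset.mem_filter.2 ⟨ha, pa⟩
  obtain ⟨t, ht⟩ := Multiset.exists_cons_of_mem hafk
  rw [ht] at h
  simp only [Multiset.card_cons, Nat.add_eq_right] at h
  have : t = 0 := Multiset.card_eq_zero.1 h
  have hbfk : b ∈ s.filter p := Multiset.mem_filter.2 ⟨hb, pb⟩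
  rw [ht, this] at hbfk
  exact (Multiset.mem_singleton.1 hbfk).symm

lemma sublist_pair_indexOf {α : Type*} [DecidableEq α] {l : List α} (hnd : l.Nodup)
    {a b : α} (h : List.Sublist [a, b] l) : l.idxOf a < l.idxOf b := by
  induction l with
  | nil => simp at h
  | cons x l ih =>
    have hnd' : l.Nodup := hnd.of_cons
    have hxl : x ∉ l := (List.nodup_cons.1 hnd).1
    cases h with
    | cons _ h' =>
      have ha : a ∈ l := h'.subset (by simp)
      have hb : b ∈ l := h'.subset (by simp)
      have hxa : x ≠ a := fun e => hxl (e ▸ ha)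
      have hxb : x ≠ b := fun e => hxl (e ▸ hb)
      rw [List.idxOf_cons_ne _ hxa, List.idxOf_cons_ne _ hxb]
      exact Nat.succ_lt_succ (ih hnd' h')
    | cons_cons _ h' =>
      have hb : b ∈ l := h'.subset (by simp)
      have hxb : a ≠ b := fun e => hxl (e ▸ hb)
      rw [List.idxOf_cons_self, List.idxOf_cons_ne _ hxb]
      exact Nat.succ_pos _
end Aux

section Comm
variable {L ι : Type} [DecidableEq L] [DecidableEq ι] (rl : ι → PRule (L ⊕ ι))

lemma wf_step {i : ι} {H A : HG (L ⊕ ι)} (hwf : WFhg H) (h : ApplyAt rl i H A) :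
    WFhg A := by
  obtain ⟨e, f, he, hlbl, hinj, hfr, hext, hV, hE⟩ := h
  intro ed hed
  rw [hE] at hed
  have hVsub : H.V ⊆ A.V := by rw [hV]; exact Finset.subset_union_left
  rcases Multiset.mem_add.1 hed with hed | hed
  · obtain ⟨h1, h2⟩ := hwf ed (Multiset.mem_of_mem_erase hed)
    exact ⟨fun x hx => hVsub (h1 x hx), h2⟩
  · obtain ⟨ed0, hed0, rfl⟩ := Multiset.mem_map.1 hed
    obtain ⟨hsub0, hnd0⟩ := (rl i).edges_sub ed0 hed0
    constructor
    · intro x hx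
      obtain ⟨y, hy, rfl⟩ := List.mem_map.1 hx
      by_cases hyext : y ∈ (rl i).ext
      · have : f y ∈ e.1 := hext ▸ List.mem_map_of_mem (f := f) hyext
        exact hVsub ((hwf e he).1 _ this)
      · rw [hV]
        exact Finset.mem_union_right _ (Finset.mem_image.2 ⟨y,
          Finset.mem_sdiff.2 ⟨hsub0 y hy, by simpa using hyext⟩, rfl⟩)
    · exact hnd0.map_on fun x hx y hy hxy =>
        hinj (hsub0 x hx) (hsub0 y hy) hxy

lemma comm_step {i k : ι} {H B C : HG (L ⊕ ι)} (hik : i ≠ k)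
    (hno : ∀ ed ∈ (rl k).rhs.E, ed.2 ≠ Sum.inr i)
    (h1 : ApplyAt rl k H B) (h2 : ApplyAt rl i B C) :
    ∃ A, ApplyAt rl i H A ∧ ApplyAt rl k A C := by
  obtain ⟨ek, fk, hek, hlk, hinjk, hfrk, hextk, hBV, hBE⟩ := h1
  obtain ⟨ei, fi, hei, hli, hinji, hfri, hexti, hCV, hCE⟩ := h2
  have hne : ei ≠ ek := fun h => by rw [h, hlk] at hli; exact hik (Sum.inr.inj hli).symm
  -- ei comes from H
  have heiH' : ei ∈ H.E.erase ek := by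
    rw [hBE] at hei
    rcases Multiset.mem_add.1 hei with h | h
    · exact h
    · obtain ⟨ed0, hed0, h0⟩ := Multiset.mem_map.1 h
      exact absurd (by rw [← h0] at hli; exact hli) (hno ed0 hed0)
  have heiH : ei ∈ H.E := Multiset.mem_of_mem_erase heiH'
  have hHsubB : H.V ⊆ B.V := by rw [hBV]; exact Finset.subset_union_left
  refine ⟨⟨H.V ∪ ((rl i).rhs.V \ (rl i).ext.toFinset).image fi,
      H.E.erase ei + (rl i).rhs.E.map (fun ed => (ed.1.map fi, ed.2))⟩,
    ⟨ei, fi, heiH, hli, hinji, fun v hv hve => fun hmem => hfri v hv hve (hHsubB hmem),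
      hexti, rfl, rfl⟩, ⟨ek, fk, ?_, hlk, hinjk, ?_, hextk, ?_, ?_⟩⟩
  · exact Multiset.mem_add.2 (Or.inl ((Multiset.mem_erase_of_ne hne.symm).2 hek))
  · -- freshness of fk w.r.t. new V
    intro v hv hve
    simp only [Finset.mem_union, Finset.mem_image, not_or]
    refine ⟨hfrk v hv hve, ?_⟩
    rintro ⟨w, hw, hwv⟩
    obtain ⟨hw1, hw2⟩ := Finset.mem_sdiff.1 hw
    have h1 : fi w ∉ B.V := hfri w hw1 (by simpa using hw2)
    have h2 : fk v ∈ B.V := by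
      rw [hBV]
      exact Finset.mem_union_right _ (Finset.mem_image.2 ⟨v,
        Finset.mem_sdiff.2 ⟨hv, by simpa using hve⟩, rfl⟩)
    exact h1 (hwv ▸ h2)
  · -- vertex sets
    rw [hCV, hBV, Finset.union_right_comm]
  · -- edge multisets
    rw [hCE, hBE, erase_add_of_mem _ heiH',
      erase_add_of_mem _ ((Multiset.mem_erase_of_ne hne.symm).2 hek),
      Multiset.erase_comm, add_right_comm]

lemma bubble {σ : List ι} {H K : HG (L ⊕ ι)} (i : ι) (hi : i ∈ σ)
    (hno : ∀ k ∈ σ, ∀ ed ∈ (rl k).rhs.E, ed.2 ≠ Sum.inr i)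
    (h : ApplySeq rl σ H K) :
    ∃ A, ApplyAt rl i H A ∧ ApplySeq rl (σ.erase i) A K := by
  induction h with
  | nil => simp at hi
  | @cons k τ H B K h1 h2 ih =>
    by_cases hk : k = i
    · subst hk
      rw [List.erase_cons_head]
      exact ⟨B, h1, h2⟩
    · have hiτ : i ∈ τ := by
        rcases List.mem_cons.1 hi with h | h
        · exact absurd h.symm hk
        · exact h
      obtain ⟨Cm, hCm1, hCm2⟩ := ih hiτ (fun k' hk' => hno k' (List.mem_cons_of_mem _ hk'))
      have hik : i ≠ k := fun h => hk h.symm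
      obtain ⟨A, hA1, hA2⟩ := comm_step rl hik (hno k (List.mem_cons_self)) h1 hCm1
      refine ⟨A, hA1, ?_⟩
      rw [List.erase_cons_tail]
      · exact ApplySeq.cons hA2 hCm2
      · simpa using hk

end Comm

section Transport
variable {L ι : Type} [DecidableEq L] [DecidableEq ι] (rl : ι → PRule (L ⊕ ι))

lemma transport_step {i : ι} {H H' A A' : HG (L ⊕ ι)} (hwf : WFhg H)
    (hcnt : H.E.countP (fun ed => ed.2 = Sum.inr i) = 1)
    (hiso : HGIso H H') (h1 : ApplyAt rl i H A) (h2 : ApplyAt rl i H' A') :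
    HGIso A A' := by
  obtain ⟨g, hg_inj, hg_img, hg_E⟩ := hiso
  obtain ⟨e, f, he, hl, hinj, hfr, hext, hAV, hAE⟩ := h1
  obtain ⟨e', f', he', hl', hinj', hfr', hext', hAV', hAE'⟩ := h2
  have hcnt' : H'.E.countP (fun ed => ed.2 = Sum.inr i) = 1 := by
    rw [← hg_E, Multiset.countP_map, ← hcnt, Multiset.countP_eq_card_filter]
  have hme : ((e.1.map g, e.2) : List ℕ × (L ⊕ ι)) ∈ H'.E := by
    rw [← hg_E]; exact Multiset.mem_map_of_mem _ he
  have hee : e' = (e.1.map g, e.2) :=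
    countP_one_unique _ hcnt' he' hme hl' hl
  set g' : ℕ → ℕ :=
    fun x => if x ∈ H.V then g x else f' (Function.invFunOn f ((rl i).rhs.V : Set ℕ) x)
    with hg'def
  have key : ∀ v ∈ (rl i).rhs.V, g' (f v) = f' v := by
    intro v hv
    by_cases hve : v ∈ (rl i).ext
    · have hfv : f v ∈ e.1 := hext ▸ List.mem_map_of_mem (f := f) hve
      have hfvH : f v ∈ H.V := (hwf e he).1 _ hfv
      have hmaps : (rl i).ext.map (fun w => g (f w)) = (rl i).ext.map f' := by
        rw [hext', hee, ← hext, List.map_map]; rfl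
      have := (List.map_eq_map_iff.1 hmaps) v hve
      rw [hg'def]; simp only [hfvH, if_pos]; exact this
    · have hfvH : f v ∉ H.V := hfr v hv hve
      have hinv : Function.invFunOn f ((rl i).rhs.V : Set ℕ) (f v) = v :=
        hinj.leftInvOn_invFunOn hv
      rw [hg'def]; simp only [hfvH, if_neg, if_false, hinv]
  have hg'H : ∀ x ∈ H.V, g' x = g x := by
    intro x hx; rw [hg'def]; simp only [hx, if_pos]
  -- facts about new vertices
  have himgN : ∀ x ∈ ((rl i).rhs.V \ (rl i).ext.toFinset).image f,
      ∃ v, v ∈ (rl i).rhs.V ∧ v ∉ (rl i).ext ∧ f v = x := by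
    intro x hx
    obtain ⟨v, hv, rfl⟩ := Finset.mem_image.1 hx
    obtain ⟨hv1, hv2⟩ := Finset.mem_sdiff.1 hv
    exact ⟨v, hv1, by simpa using hv2, rfl⟩
  refine ⟨g', ?_, ?_, ?_⟩
  · -- injectivity
    rw [hAV]
    intro x hx y hy hxy
    simp only [Finset.coe_union, Set.mem_union, Finset.mem_coe] at hx hy
    rcases hx with hx | hx <;> rcases hy with hy | hy
    · exact hg_inj hx hy (by rwa [hg'H x hx, hg'H y hy] at hxy)
    · obtain ⟨v, hv1, hv2, rfl⟩ := himgN y hy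
      have h1 : g' x ∈ H'.V := by
        rw [hg'H x hx, ← hg_img]; exact Finset.mem_image_of_mem g hx
      have h2 : g' (f v) ∉ H'.V := by rw [key v hv1]; exact hfr' v hv1 hv2
      exact absurd (hxy ▸ h1) h2
    · obtain ⟨v, hv1, hv2, rfl⟩ := himgN x hx
      have h1 : g' y ∈ H'.V := by
        rw [hg'H y hy, ← hg_img]; exact Finset.mem_image_of_mem g hy
      have h2 : g' (f v) ∉ H'.V := by rw [key v hv1]; exact hfr' v hv1 hv2
      exact absurd (hxy.symm ▸ h1) h2
    · obtain ⟨v, hv1, hv2, rfl⟩ := himgN x hx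
      obtain ⟨w, hw1, hw2, rfl⟩ := himgN y hy
      rw [key v hv1, key w hw1] at hxy
      exact congrArg f (hinj' hv1 hw1 hxy)
  · -- image of vertex set
    rw [hAV, hAV', Finset.image_union]
    congr 1
    · rw [Finset.image_congr (fun x hx => hg'H x hx), hg_img]
    · rw [Finset.image_image]
      refine Finset.image_congr ?_
      intro v hv
      obtain ⟨hv1, _⟩ := Finset.mem_sdiff.1 hv
      exact key v hv1
  · -- edge multisets
    rw [hAE, hAE', Multiset.map_add]
    have hpart1 : (H.E.erase e).map (fun ed => (ed.1.map g', ed.2)) =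
        H'.E.erase e' := by
      have hstep : (H.E.erase e).map (fun ed => (ed.1.map g', ed.2)) =
          (H.E.erase e).map (fun ed => (ed.1.map g, ed.2)) := by
        refine Multiset.map_congr rfl ?_
        intro ed hed
        have hedH : ed ∈ H.E := Multiset.mem_of_mem_erase hed
        have : ed.1.map g' = ed.1.map g :=
          List.map_congr_left fun x hx => hg'H x ((hwf ed hedH).1 x hx)
        rw [this]
      have hsplit : H'.E = ((e.1.map g, e.2) : List ℕ × (L ⊕ ι)) ::ₘ
          (H.E.erase e).map (fun ed => (ed.1.map g, ed.2)) := by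
        rw [← hg_E]
        conv_lhs => rw [← Multiset.cons_erase he]
        rw [Multiset.map_cons]
      rw [hstep, hsplit, hee, Multiset.erase_cons_head]
    have hpart2 : ((rl i).rhs.E.map (fun ed => (ed.1.map f, ed.2))).map
        (fun ed => (ed.1.map g', ed.2)) =
        (rl i).rhs.E.map (fun ed => (ed.1.map f', ed.2)) := by
      rw [Multiset.map_map]
      refine Multiset.map_congr rfl ?_
      intro ed hed
      have hsub := ((rl i).edges_sub ed hed).1
      simp only [Function.comp]
      rw [List.map_map]
      have : ed.1.map (g' ∘ f) = ed.1.map f' :=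
        List.map_congr_left fun x hx => key x (hsub x hx)
      rw [this]
    rw [hpart1, hpart2]
end Transport

section Main
variable {L ι : Type} [DecidableEq L] [DecidableEq ι]

/-- parents never occur strictly after their children -/
def Ordered (ρ : ι) (pa : ι → ι) (σ : List ι) : Prop :=
  ∀ j, j ≠ ρ → ¬ List.Sublist [j, pa j] σ

/-- counting invariant: available non-terminals occur exactly once -/
def InvC (ρ : ι) (pa : ι → ι) (σ : List ι) (H : HG (L ⊕ ι)) : Prop :=
  ∀ j, H.E.countP (fun ed => ed.2 = Sum.inr j) =
    if j ∈ σ ∧ (j = ρ ∨ pa j ∉ σ) then 1 else 0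

lemma head_avail {ρ : ι} {pa : ι → ι}
    (hacyc : ∃ ht : ι → ℕ, ht ρ = 0 ∧ ∀ i : ι, i ≠ ρ → ht (pa i) < ht i)
    {i : ι} {τ : List ι} (hord : Ordered ρ pa (i :: τ)) :
    i = ρ ∨ pa i ∉ (i :: τ) := by
  by_cases hiρ : i = ρ
  · exact Or.inl hiρ
  · right
    obtain ⟨ht, _, hht⟩ := hacyc
    intro hmem
    rcases List.mem_cons.1 hmem with h | h
    · exact absurd (h ▸ hht i hiρ) (Nat.lt_irrefl _)
    · exact hord i hiρ ((List.singleton_sublist.2 h).cons₂ i)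

lemma inv_step {ρ : ι} {pa : ι → ι}
    (hacyc : ∃ ht : ι → ℕ, ht ρ = 0 ∧ ∀ i : ι, i ≠ ρ → ht (pa i) < ht i)
    (rl : ι → PRule (L ⊕ ι))
    (hchild : ∀ i j : ι, j ≠ ρ → pa j = i →
      ((rl i).rhs.E.countP (fun ed => ed.2 = Sum.inr j)) = 1)
    (hnoother : ∀ i : ι, ∀ ed ∈ (rl i).rhs.E, ∀ j : ι, ed.2 = Sum.inr j →
      (j ≠ ρ ∧ pa j = i))
    {i : ι} {τ : List ι} {H A : HG (L ⊕ ι)}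
    (hnd : (i :: τ).Nodup) (hord : Ordered ρ pa (i :: τ))
    (hcl : ∀ j, j ≠ ρ → pa j ∈ (i :: τ) → j ∈ (i :: τ))
    (hinv : InvC ρ pa (i :: τ) H) (h : ApplyAt rl i H A) :
    InvC ρ pa τ A := by
  obtain ⟨hts, htρ, hht⟩ := hacyc
  obtain ⟨e, f, he, hl, hinj, hfr, hext, hV, hE⟩ := h
  have hitτ : i ∉ τ := (List.nodup_cons.1 hnd).1
  intro j
  have hXcnt : (Multiset.map (fun ed => (ed.1.map f, ed.2)) (rl i).rhs.E).countP
      (fun ed => ed.2 = Sum.inr j) =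
      (rl i).rhs.E.countP (fun ed => ed.2 = Sum.inr j) := by
    rw [Multiset.countP_map, ← Multiset.countP_eq_card_filter]
  have hsum : A.E.countP (fun ed => ed.2 = Sum.inr j) =
      (H.E.erase e).countP (fun ed => ed.2 = Sum.inr j) +
      (rl i).rhs.E.countP (fun ed => ed.2 = Sum.inr j) := by
    rw [hE, Multiset.countP_add, hXcnt]
  have hHeq : H.E.countP (fun ed => ed.2 = Sum.inr j) =
      (H.E.erase e).countP (fun ed => ed.2 = Sum.inr j) +
      (if e.2 = Sum.inr j then 1 else 0) := by
    conv_lhs => rw [← Multiset.cons_erase he]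
    rw [Multiset.countP_cons]
  by_cases hji : j = i
  · subst hji
    have hcond : j ∈ (j :: τ) ∧ (j = ρ ∨ pa j ∉ (j :: τ)) :=
      ⟨List.mem_cons_self, head_avail ⟨hts, htρ, hht⟩ hord⟩
    have h1 : H.E.countP (fun ed => ed.2 = Sum.inr j) = 1 := by
      rw [hinv j, if_pos hcond]
    have hrhs : (rl j).rhs.E.countP (fun ed => ed.2 = Sum.inr j) = 0 := by
      rw [Multiset.countP_eq_zero]
      intro ed hed hlab
      obtain ⟨hjρ, hpj⟩ := hnoother j ed hed j hlab
      exact absurd (hpj ▸ hht j hjρ) (Nat.lt_irrefl _)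
    have he2 : (if e.2 = Sum.inr j then 1 else 0) = 1 := by rw [if_pos hl]
    rw [hsum, hrhs, if_neg (fun hc => hitτ hc.1)]
    omega
  · have he2 : (if e.2 = Sum.inr j then 1 else 0) = 0 := by
      rw [if_neg]; rw [hl]; simp only [Sum.inr.injEq]; exact fun h => hji h.symm
    have her : (H.E.erase e).countP (fun ed => ed.2 = Sum.inr j) =
        H.E.countP (fun ed => ed.2 = Sum.inr j) := by omega
    by_cases hch : j ≠ ρ ∧ pa j = i
    · have hrhs : (rl i).rhs.E.countP (fun ed => ed.2 = Sum.inr j) = 1 :=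
        hchild i j hch.1 hch.2
      have hH0 : H.E.countP (fun ed => ed.2 = Sum.inr j) = 0 := by
        rw [hinv j, if_neg]
        rintro ⟨_, h2⟩
        rcases h2 with h2 | h2
        · exact hch.1 h2
        · exact h2 (hch.2 ▸ List.mem_cons_self)
      have hjτ : j ∈ τ := by
        rcases List.mem_cons.1 (hcl j hch.1 (hch.2 ▸ List.mem_cons_self)) with h | h
        · exact absurd h hji
        · exact h
      rw [hsum, her, hH0, hrhs, if_pos ⟨hjτ, Or.inr (hch.2 ▸ hitτ)⟩]
    · have hrhs : (rl i).rhs.E.countP (fun ed => ed.2 = Sum.inr j) = 0 := by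
        rw [Multiset.countP_eq_zero]
        intro ed hed hlab
        exact hch (hnoother i ed hed j hlab)
      have hcond : (j ∈ (i :: τ) ∧ (j = ρ ∨ pa j ∉ (i :: τ))) ↔
          (j ∈ τ ∧ (j = ρ ∨ pa j ∉ τ)) := by
        constructor
        · rintro ⟨h1, h2⟩
          refine ⟨(List.mem_cons.1 h1).resolve_left hji, ?_⟩
          rcases h2 with h2 | h2
          · exact Or.inl h2
          · exact Or.inr fun hm => h2 (List.mem_cons_of_mem _ hm)
        · rintro ⟨h1, h2⟩
          refine ⟨List.mem_cons_of_mem _ h1, ?_⟩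
          rcases h2 with h2 | h2
          · exact Or.inl h2
          · by_cases hjρ : j = ρ
            · exact Or.inl hjρ
            · refine Or.inr fun hm => ?_
              rcases List.mem_cons.1 hm with hm | hm
              · exact hch ⟨hjρ, hm⟩
              · exact h2 hm
      rw [hsum, her, hrhs, hinv j]
      by_cases hc : j ∈ τ ∧ (j = ρ ∨ pa j ∉ τ)
      · rw [if_pos (hcond.2 hc), if_pos hc]
      · rw [if_neg (fun h => hc (hcond.1 h)), if_neg hc]

lemma main_lemma {ρ : ι} {pa : ι → ι}
    (hacyc : ∃ ht : ι → ℕ, ht ρ = 0 ∧ ∀ i : ι, i ≠ ρ → ht (pa i) < ht i)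
    (rl : ι → PRule (L ⊕ ι))
    (hchild : ∀ i j : ι, j ≠ ρ → pa j = i →
      ((rl i).rhs.E.countP (fun ed => ed.2 = Sum.inr j)) = 1)
    (hnoother : ∀ i : ι, ∀ ed ∈ (rl i).rhs.E, ∀ j : ι, ed.2 = Sum.inr j →
      (j ≠ ρ ∧ pa j = i)) :
    ∀ (σ : List ι) {σ' : List ι} {H H' K K' : HG (L ⊕ ι)},
      σ.Perm σ' → σ.Nodup → Ordered ρ pa σ →
      (∀ j, j ≠ ρ → pa j ∈ σ → j ∈ σ) →
      WFhg H → InvC ρ pa σ H → HGIso H H' →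
      ApplySeq rl σ H K → ApplySeq rl σ' H' K' → HGIso K K' := by
  intro σ
  induction σ with
  | nil =>
    intro σ' H H' K K' hperm _ _ _ _ _ hiso h h'
    have hσ' : σ' = [] := hperm.symm.eq_nil
    subst hσ'
    cases h; cases h'
    exact hiso
  | cons i τ ih =>
    intro σ' H H' K K' hperm hnd hord hcl hwf hinv hiso hseq hseq'
    cases hseq with
    | @cons _ _ _ A _ h1 h2 =>
      have hpa : i = ρ ∨ pa i ∉ (i :: τ) := head_avail hacyc hord
      have hiσ' : i ∈ σ' := hperm.mem_iff.1 (List.mem_cons_self)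
      have hno : ∀ k ∈ σ', ∀ ed ∈ (rl k).rhs.E, ed.2 ≠ Sum.inr i := by
        intro k hk ed hed hlab
        obtain ⟨hiρ, hpai⟩ := hnoother k ed hed i hlab
        rcases hpa with h | h
        · exact hiρ h
        · exact h (hperm.mem_iff.2 (hpai ▸ hk))
      obtain ⟨A'', hA''1, hA''2⟩ := bubble rl i hiσ' hno hseq'
      have hcnt : H.E.countP (fun ed => ed.2 = Sum.inr i) = 1 := by
        rw [hinv i, if_pos ⟨List.mem_cons_self, hpa⟩]
      have hisoA : HGIso A A'' := transport_step rl hwf hcnt hiso h1 hA''1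
      have hperm' : τ.Perm (σ'.erase i) :=
        (hperm.trans (List.perm_cons_erase hiσ')).cons_inv
      refine ih hperm' hnd.of_cons ?_ ?_ (wf_step rl hwf h1)
        (inv_step hacyc rl hchild hnoother hnd hord hcl hinv h1) hisoA h2 hA''2
      · exact fun j hj hsub => hord j hj (hsub.cons i)
      · intro j hj hpj
        have hji : j ≠ i := by
          rintro rfl
          rcases hpa with h | h
          · exact hj h
          · exact h (List.mem_cons_of_mem _ hpj)
        exact (List.mem_cons.1 (hcl j hj (List.mem_cons_of_mem _ hpj))).resolve_left hji
end Main

/-- For a parse tree of a context-free hyperedge replacement grammar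
(nodes `ι`, root `ρ`, parent map `pa`, node `i` labeled by the production rule `rl i`,
where the non-terminal hyperedges occurring in the right-hand side of `rl i` are exactly
(one copy each of) the non-terminals corresponding to the children of `i`), any two orders
of applying the production rules that are consistent with the tree structure (parents
applied before children) yield isomorphic hypergraphs; in particular the parse sequence
obtained by a depth-first traversal generates the same hypergraph as the parse tree. -/
theorem stmt11 [DecidableEq L] [DecidableEq ι] [Fintype ι]
    (ρ : ι) (pa : ι → ι)
    (hacyc : ∃ ht : ι → ℕ, ht ρ = 0 ∧ ∀ i : ι, i ≠ ρ → ht (pa i) < ht i)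
    (rl : ι → PRule (L ⊕ ι))
    (hchild : ∀ i j : ι, j ≠ ρ → pa j = i →
      ((rl i).rhs.E.countP (fun ed => ed.2 = Sum.inr j)) = 1)
    (hnoother : ∀ i : ι, ∀ ed ∈ (rl i).rhs.E, ∀ j : ι, ed.2 = Sum.inr j →
      (j ≠ ρ ∧ pa j = i))
    (σ₁ σ₂ : List ι) (h₁ : ConsistentOrder ρ pa σ₁) (h₂ : ConsistentOrder ρ pa σ₂)
    (H₁ H₂ : HG (L ⊕ ι))
    (hap₁ : ApplySeq rl σ₁ ⟨∅, {([], Sum.inr ρ)}⟩ H₁)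
    (hap₂ : ApplySeq rl σ₂ ⟨∅, {([], Sum.inr ρ)}⟩ H₂) :
    HGIso H₁ H₂ := by
  obtain ⟨hnd₁, hmem₁, hord₁⟩ := h₁
  obtain ⟨hnd₂, hmem₂, hord₂⟩ := h₂
  have hperm : σ₁.Perm σ₂ :=
    (List.perm_ext_iff_of_nodup hnd₁ hnd₂).2 fun a => by simp [hmem₁ a, hmem₂ a]
  have hord : Ordered ρ pa σ₁ := by
    intro j hj hsub
    have hx1 := sublist_pair_indexOf hnd₁ hsub
    have hx2 := hord₁ j hj (hmem₁ _) (hmem₁ _)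
    omega
  have hwf : WFhg (⟨∅, {([], Sum.inr ρ)}⟩ : HG (L ⊕ ι)) := by
    intro ed hed
    have : ed = ([], Sum.inr ρ) := by simpa using hed
    subst this
    simp
  have hinv : InvC ρ pa σ₁ (⟨∅, {([], Sum.inr ρ)}⟩ : HG (L ⊕ ι)) := by
    intro j
    by_cases hj : j = ρ
    · subst hj
      rw [if_pos ⟨hmem₁ j, Or.inl rfl⟩]
      show Multiset.countP _ (([], Sum.inr j) ::ₘ 0) = 1
      rw [Multiset.countP_cons, Multiset.countP_zero, if_pos rfl]
    · rw [if_neg (by rintro ⟨_, h | h⟩; exacts [hj h, h (hmem₁ _)])]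
      show Multiset.countP _ (([], Sum.inr ρ) ::ₘ 0) = 0
      rw [Multiset.countP_cons, Multiset.countP_zero, if_neg]
      simp only [Sum.inr.injEq]
      exact Ne.symm hj
  have hiso : HGIso (⟨∅, {([], Sum.inr ρ)}⟩ : HG (L ⊕ ι)) ⟨∅, {([], Sum.inr ρ)}⟩ :=
    ⟨id, Set.injOn_id _, Finset.image_id, by simp⟩
  exact main_lemma hacyc rl hchild hnoother σ₁ hperm hnd₁ hord (fun j _ _ => hmem₁ j)
    hwf hinv hiso hap₁ hap₂
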